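/- Let T = (T₁,…,T_m) be a commuting m-tuple of bounded operators on a Hilbert space H. Suppose there exist μ > 0 and a positive integer k such that ‖Q_T^k(I)h‖ ≥ μ^{2k}‖h‖ for all h ∈ H. Then for every λ ∈ ℂ^m with ‖λ‖₂ < μ and every unit vector h ∈ H, Σ_{|α|=k} (k!/α!)·‖T^α h − λ^α h‖² ≥ (μ^k − ‖λ‖₂^k)² > 0. -/

import Mathlib

set_option synthInstance.maxHeartbeats 1000000
set_option maxHeartbeats 1000000

lemma multiindex_induction {m : ℕ} (C : (Fin m → ℕ) → Prop) (h0 : C 0)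
    (hstep : ∀ (α : Fin m → ℕ) (j : Fin m), C α → C (α + Pi.single j 1)) :
    ∀ α, C α := by
  have key : ∀ n (α : Fin m → ℕ), (∑ i, α i) = n → C α := by
    intro n
    induction n with
    | zero =>
      intro α hα
      have : α = 0 := by
        funext i
        exact Finset.sum_eq_zero_iff.mp hα i (Finset.mem_univ i)
      rwa [this]
    | succ n ih =>
      intro α hα
      have hex : ∃ j, α j ≠ 0 := by
        by_contra hcon
        push_neg at hcon
        simp [hcon] at hα
      obtain ⟨j, hj⟩ := hex
      set β := Function.update α j (α j - 1) with hβ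
      have hαβ : α = β + Pi.single j 1 := by
        funext i
        by_cases hij : i = j
        · subst hij; simp [hβ, Function.update_self]; omega
        · simp [hβ, Function.update_of_ne hij, Pi.single_eq_of_ne hij]
      have hsum : ∑ i, β i = n := by
        have h1 := Finset.sum_update_of_mem (Finset.mem_univ j) α (α j - 1)
        have h2 := Finset.sum_eq_sum_sdiff_singleton_add (Finset.mem_univ j) α
        rw [hβ, h1]
        rw [h2] at hα
        omega
      rw [hαβ]
      exact hstep β j (ih β hsum)
  exact fun α => key _ α rfl

open ContinuousLinearMap in
lemma selfadjoint_isUnit {H : Type*} [NormedAddCommGroup H] [InnerProductSpace ℂ H]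
    [CompleteSpace H] (Q : H →L[ℂ] H) (hQ : IsSelfAdjoint Q) {c : ℝ} (hc : 0 < c)
    (hb : ∀ x, c * ‖x‖ ≤ ‖Q x‖) : IsUnit Q := by
  rw [isUnit_iff_bijective, bijective_iff_dense_range_and_antilipschitz]
  have hanti : AntilipschitzWith (⟨c, hc.le⟩ : NNReal)⁻¹ Q := by
    apply ContinuousLinearMap.antilipschitz_of_bound
    intro x
    change ‖x‖ ≤ (c : ℝ)⁻¹ * ‖Q x‖
    rw [inv_mul_eq_div, le_div_iff₀ hc]
    linarith [hb x]
  refine ⟨?_, ⟨_, hanti⟩⟩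
  rw [Submodule.topologicalClosure_eq_top_iff, Submodule.eq_bot_iff]
  intro x hx
  have hQx : Q x = 0 := by
    have h1 : ∀ y : H, inner ℂ (Q y) x = (0 : ℂ) := fun y => hx (Q y) ⟨y, rfl⟩
    have h2 : inner ℂ (Q x) (Q x) = (0 : ℂ) := by
      calc inner ℂ (Q x) (Q x) = inner ℂ (Q (Q x)) x := by
            rw [← ContinuousLinearMap.adjoint_inner_left, hQ.adjoint_eq]
        _ = 0 := h1 (Q x)
    exact inner_self_eq_zero.mp h2
  have := hb x
  rw [hQx, norm_zero] at this
  have hx0 : ‖x‖ ≤ 0 := by nlinarith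
  simpa using le_antisymm hx0 (norm_nonneg x)

lemma coercive_of_positive {H : Type*} [NormedAddCommGroup H] [InnerProductSpace ℂ H]
    [CompleteSpace H] (Q : H →L[ℂ] H) (hQ : Q.IsPositive) {c : ℝ} (hc : 0 < c)
    (hb : ∀ x, c * ‖x‖ ≤ ‖Q x‖) :
    ∀ x : H, c * ‖x‖ ^ 2 ≤ RCLike.re (inner ℂ (Q x) x : ℂ) := by
  obtain ⟨u, hu⟩ := selfadjoint_isUnit Q hQ.isSelfAdjoint hc hb
  set R : H →L[ℂ] H := ↑u⁻¹ with hR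
  have hQR : Q * R = 1 := by rw [← hu, hR]; exact u.mul_inv
  have hRQ : R * Q = 1 := by rw [← hu, hR]; exact u.inv_mul
  have hQRx : ∀ x, Q (R x) = x := fun x => by
    have : (Q * R) x = (1 : H →L[ℂ] H) x := by rw [hQR]
    simpa using this
  have hRQx : ∀ x, R (Q x) = x := fun x => by
    have : (R * Q) x = (1 : H →L[ℂ] H) x := by rw [hRQ]
    simpa using this
  have hRsa : IsSelfAdjoint R := by
    have h1 : star R * Q = 1 := by
      have : star (Q * R) = 1 := by rw [hQR]; exact star_one _
      rwa [star_mul, hQ.isSelfAdjoint.star_eq] at this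
    calc star R = star R * (Q * R) := by rw [hQR, mul_one]
      _ = (star R * Q) * R := by rw [mul_assoc]
      _ = R := by rw [h1, one_mul]
  have hRpos : R.IsPositive := by
    refine ⟨ContinuousLinearMap.isSelfAdjoint_iff_isSymmetric.mp hRsa, fun x => ?_⟩
    have h1 : (inner ℂ (Q (R x)) (R x) : ℂ) = inner ℂ x (R x) := by rw [hQRx]
    have h2 : RCLike.re (inner ℂ (R x) x : ℂ) = RCLike.re (inner ℂ (Q (R x)) (R x) : ℂ) := by
      rw [h1, inner_re_symm]
    rw [ContinuousLinearMap.reApplyInnerSelf, h2]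
    exact hQ.re_inner_nonneg_left _
  have hR0 : (0 : H →L[ℂ] H) ≤ R := (ContinuousLinearMap.nonneg_iff_isPositive R).mpr hRpos
  set S := CFC.sqrt R with hS
  have hSS : S * S = R := CFC.sqrt_mul_sqrt_self R hR0
  have hSpos : (0 : H →L[ℂ] H) ≤ S := CFC.sqrt_nonneg R
  have hSsa : IsSelfAdjoint S := hSpos.isSelfAdjoint
  have hSx : ∀ x y : H, (inner ℂ (S x) (S y) : ℂ) = inner ℂ (R x) y := by
    intro x y
    rw [← ContinuousLinearMap.adjoint_inner_left, hSsa.adjoint_eq]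
    have : S (S x) = R x := by rw [← hSS]; rfl
    rw [this]
  have hSnorm : ∀ x : H, ‖S x‖ ^ 2 = RCLike.re (inner ℂ (R x) x : ℂ) := by
    intro x
    rw [← hSx x x]
    rw [← @inner_self_eq_norm_sq ℂ]
  intro x
  rcases eq_or_ne x 0 with rfl | hx0
  · simp
  have key : ‖x‖ ^ 2 ≤ ‖S (Q x)‖ * ‖S x‖ := by
    have h1 : (inner ℂ (S (Q x)) (S x) : ℂ) = inner ℂ x x := by
      rw [hSx, hRQx]
    have h2 : ‖x‖ ^ 2 = RCLike.re (inner ℂ (S (Q x)) (S x) : ℂ) := by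
      rw [h1, ← @inner_self_eq_norm_sq ℂ]
    rw [h2]
    calc RCLike.re (inner ℂ (S (Q x)) (S x) : ℂ) ≤ ‖(inner ℂ (S (Q x)) (S x) : ℂ)‖ :=
          RCLike.re_le_norm _
      _ ≤ ‖S (Q x)‖ * ‖S x‖ := norm_inner_le_norm _ _
  have hSQx : ‖S (Q x)‖ ^ 2 = RCLike.re (inner ℂ (Q x) x : ℂ) := by
    rw [hSnorm, hRQx]
    rw [inner_re_symm]
  have hSx2 : ‖S x‖ ^ 2 ≤ c⁻¹ * ‖x‖ ^ 2 := by
    rw [hSnorm]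
    have hRx : ‖R x‖ ≤ c⁻¹ * ‖x‖ := by
      have := hb (R x)
      rw [hQRx] at this
      rw [← le_div_iff₀' hc] at this
      simpa [div_eq_inv_mul] using this
    calc RCLike.re (inner ℂ (R x) x : ℂ) ≤ ‖(inner ℂ (R x) x : ℂ)‖ := RCLike.re_le_norm _
      _ ≤ ‖R x‖ * ‖x‖ := norm_inner_le_norm _ _
      _ ≤ (c⁻¹ * ‖x‖) * ‖x‖ := by
          apply mul_le_mul_of_nonneg_right hRx (norm_nonneg x)
      _ = c⁻¹ * ‖x‖ ^ 2 := by ring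
  have hQxre : 0 ≤ RCLike.re (inner ℂ (Q x) x : ℂ) := hQ.re_inner_nonneg_left x
  have h4 : ‖x‖ ^ 4 ≤ RCLike.re (inner ℂ (Q x) x : ℂ) * (c⁻¹ * ‖x‖ ^ 2) := by
    calc ‖x‖ ^ 4 = (‖x‖ ^ 2) ^ 2 := by ring
      _ ≤ (‖S (Q x)‖ * ‖S x‖) ^ 2 := by
          apply pow_le_pow_left₀ (by positivity) key
      _ = ‖S (Q x)‖ ^ 2 * ‖S x‖ ^ 2 := by ring
      _ ≤ RCLike.re (inner ℂ (Q x) x : ℂ) * (c⁻¹ * ‖x‖ ^ 2) := by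
          rw [← hSQx]
          exact mul_le_mul_of_nonneg_left hSx2 (by positivity)
  have hxpos : 0 < ‖x‖ := norm_pos_iff.mpr hx0
  have h6 := mul_le_mul_of_nonneg_left h4 hc.le
  have h7 : c * (RCLike.re (inner ℂ (Q x) x : ℂ) * (c⁻¹ * ‖x‖ ^ 2))
      = RCLike.re (inner ℂ (Q x) x : ℂ) * ‖x‖ ^ 2 := by
    field_simp
  have h8 : (c * ‖x‖ ^ 2) * ‖x‖ ^ 2 ≤ RCLike.re (inner ℂ (Q x) x : ℂ) * ‖x‖ ^ 2 := by
    calc (c * ‖x‖ ^ 2) * ‖x‖ ^ 2 = c * ‖x‖ ^ 4 := by ring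
      _ ≤ c * (RCLike.re (inner ℂ (Q x) x : ℂ) * (c⁻¹ * ‖x‖ ^ 2)) := h6
      _ = RCLike.re (inner ℂ (Q x) x : ℂ) * ‖x‖ ^ 2 := h7
  exact le_of_mul_le_mul_right h8 (pow_pos hxpos 2)

lemma weighted_minkowski {ι : Type*} (s : Finset ι) (f g : ι → ℝ)
    (hf : ∀ i ∈ s, 0 ≤ f i) (hg : ∀ i ∈ s, 0 ≤ g i) :
    (Real.sqrt (∑ i ∈ s, f i ^ 2) - Real.sqrt (∑ i ∈ s, g i ^ 2)) ^ 2 ≤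
      ∑ i ∈ s, (f i - g i) ^ 2 := by
  set F := ∑ i ∈ s, f i ^ 2 with hF
  set G := ∑ i ∈ s, g i ^ 2 with hG
  have hF0 : 0 ≤ F := Finset.sum_nonneg fun i _ => sq_nonneg _
  have hG0 : 0 ≤ G := Finset.sum_nonneg fun i _ => sq_nonneg _
  have hcs : ∑ i ∈ s, f i * g i ≤ Real.sqrt F * Real.sqrt G := by
    have h1 : (∑ i ∈ s, f i * g i) ^ 2 ≤ F * G := Finset.sum_mul_sq_le_sq_mul_sq s f g
    have h2 : 0 ≤ ∑ i ∈ s, f i * g i :=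
      Finset.sum_nonneg fun i hi => mul_nonneg (hf i hi) (hg i hi)
    calc ∑ i ∈ s, f i * g i = Real.sqrt ((∑ i ∈ s, f i * g i) ^ 2) :=
          (Real.sqrt_sq h2).symm
      _ ≤ Real.sqrt (F * G) := Real.sqrt_le_sqrt h1
      _ = Real.sqrt F * Real.sqrt G := Real.sqrt_mul hF0 _
  have hexp : ∑ i ∈ s, (f i - g i) ^ 2 = F - 2 * (∑ i ∈ s, f i * g i) + G := by
    rw [hF, hG, Finset.mul_sum, ← Finset.sum_sub_distrib, ← Finset.sum_add_distrib]
    apply Finset.sum_congr rfl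
    intro i _
    ring
  rw [hexp, sub_sq, Real.sq_sqrt hF0, Real.sq_sqrt hG0]
  linarith

theorem stmt4 {H : Type*} [NormedAddCommGroup H] [InnerProductSpace ℂ H] [CompleteSpace H]
    {m : ℕ} (T : Fin m → (H →L[ℂ] H))
    (hcomm : ∀ i j, Commute (T i) (T j))
    (P Pstar : (Fin m → ℕ) → (H →L[ℂ] H))
    (hP0 : P 0 = 1) (hPstar0 : Pstar 0 = 1)
    (hPstep : ∀ (α : Fin m → ℕ) (j : Fin m), P (α + Pi.single j 1) = T j * P α)
    (hPstarstep : ∀ (α : Fin m → ℕ) (j : Fin m),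
      Pstar (α + Pi.single j 1) = ContinuousLinearMap.adjoint (T j) * Pstar α)
    (μ : ℝ) (hμ : 0 < μ) (k : ℕ) (hk : 0 < k)
    (hlow : ∀ h : H,
      μ ^ (2 * k) * ‖h‖ ≤
        ‖(∑ α ∈ Finset.Nat.antidiagonalTuple m k,
            (Nat.multinomial Finset.univ α : ℂ) • (Pstar α * P α)) h‖)
    (lam : Fin m → ℂ)
    (hlam : Real.sqrt (∑ i, ‖lam i‖ ^ 2) < μ)
    (h : H) (hh : ‖h‖ = 1) :
    (μ ^ k - Real.sqrt (∑ i, ‖lam i‖ ^ 2) ^ k) ^ 2 ≤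
      ∑ α ∈ Finset.Nat.antidiagonalTuple m k,
        (Nat.multinomial Finset.univ α : ℝ) * ‖P α h - (∏ i, lam i ^ α i) • h‖ ^ 2 ∧
    0 < (μ ^ k - Real.sqrt (∑ i, ‖lam i‖ ^ 2) ^ k) ^ 2 := by
  classical
  set L := Real.sqrt (∑ i, ‖lam i‖ ^ 2) with hLdef
  have hL0 : 0 ≤ L := Real.sqrt_nonneg _
  clear_value L
  -- commutation of T j with P α
  have hcommP : ∀ (α : Fin m → ℕ) (j : Fin m), Commute (T j) (P α) := by
    have := multiindex_induction (fun α => ∀ j, Commute (T j) (P α))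
      (by intro j; rw [hP0]; exact Commute.one_right _)
      (by
        intro α i IH j
        rw [hPstep]
        exact (hcomm j i).mul_right (IH j))
    exact fun α j => this α j
  -- Pstar is the adjoint of P
  have hPadj : ∀ α, Pstar α = ContinuousLinearMap.adjoint (P α) := by
    apply multiindex_induction
    · rw [hPstar0, hP0, ← ContinuousLinearMap.star_eq_adjoint, star_one]
    · intro α j IH
      rw [hPstarstep, hPstep, IH, ← ContinuousLinearMap.star_eq_adjoint,
        ← ContinuousLinearMap.star_eq_adjoint, ← ContinuousLinearMap.star_eq_adjoint,
        ← star_mul, (hcommP α j).eq]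
  set A := Finset.Nat.antidiagonalTuple m k with hA
  set Q : H →L[ℂ] H :=
    ∑ α ∈ A, (Nat.multinomial Finset.univ α : ℂ) • (Pstar α * P α) with hQ
  have hQapp : ∀ x : H, Q x = ∑ α ∈ A,
      (Nat.multinomial Finset.univ α : ℂ) • (Pstar α ((P α) x)) := by
    intro x
    rw [hQ]
    simp [ContinuousLinearMap.sum_apply, ContinuousLinearMap.mul_apply]
  have hinner : ∀ x : H, (inner ℂ (Q x) x : ℂ) =
      ∑ α ∈ A, ((Nat.multinomial Finset.univ α : ℝ) * ‖P α x‖ ^ 2 : ℝ) := by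
    intro x
    rw [hQapp, sum_inner]
    rw [Complex.ofReal_sum]
    apply Finset.sum_congr rfl
    intro α _
    rw [inner_smul_left, hPadj α, ContinuousLinearMap.adjoint_inner_left,
      inner_self_eq_norm_sq_to_K, Complex.conj_natCast]
    rw [Complex.ofReal_mul, Complex.ofReal_pow, Complex.ofReal_natCast]
    rfl
  have hre : ∀ x : H, RCLike.re (inner ℂ (Q x) x : ℂ) =
      ∑ α ∈ A, (Nat.multinomial Finset.univ α : ℝ) * ‖P α x‖ ^ 2 := by
    intro x
    rw [hinner x]
    exact Complex.ofReal_re _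
  have hQpos : Q.IsPositive := by
    rw [ContinuousLinearMap.isPositive_iff_complex]
    intro x
    constructor
    · rw [hre x, hinner x]
    · rw [hre x]
      apply Finset.sum_nonneg
      intro α _
      positivity
  have hcoer := coercive_of_positive Q hQpos (c := μ ^ (2 * k))
    (pow_pos hμ _) hlow h
  rw [hre h, hh] at hcoer
  have hA2 : μ ^ (2 * k) ≤ ∑ α ∈ A, (Nat.multinomial Finset.univ α : ℝ) * ‖P α h‖ ^ 2 := by
    simpa using hcoer
  clear_value A Q
  -- the B2 identity
  have hB2 : ∑ α ∈ A, (Nat.multinomial Finset.univ α : ℝ) * ‖∏ i, lam i ^ α i‖ ^ 2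
      = (∑ i, ‖lam i‖ ^ 2) ^ k := by
    rw [Finset.sum_pow_eq_sum_piAntidiag Finset.univ (fun i => ‖lam i‖ ^ 2) k,
      Finset.piAntidiag_univ_fin_eq_antidiagonalTuple, ← hA]
    apply Finset.sum_congr rfl
    intro α _
    congr 1
    rw [norm_prod]
    rw [← Finset.prod_pow]
    apply Finset.prod_congr rfl
    intro i _
    rw [norm_pow]
    ring
  -- weighted Minkowski setup
  set f : (Fin m → ℕ) → ℝ :=
    fun α => Real.sqrt (Nat.multinomial Finset.univ α : ℝ) * ‖P α h‖ with hfdef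
  set g : (Fin m → ℕ) → ℝ :=
    fun α => Real.sqrt (Nat.multinomial Finset.univ α : ℝ) * ‖∏ i, lam i ^ α i‖ with hgdef
  have hsq : ∀ α : Fin m → ℕ,
      Real.sqrt (Nat.multinomial Finset.univ α : ℝ) ^ 2
        = (Nat.multinomial Finset.univ α : ℝ) :=
    fun α => Real.sq_sqrt (by positivity)
  have hf2 : ∑ α ∈ A, f α ^ 2
      = ∑ α ∈ A, (Nat.multinomial Finset.univ α : ℝ) * ‖P α h‖ ^ 2 := by
    apply Finset.sum_congr rfl
    intro α _
    rw [hfdef, mul_pow, hsq α]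
  have hg2 : ∑ α ∈ A, g α ^ 2 = (∑ i, ‖lam i‖ ^ 2) ^ k := by
    rw [← hB2]
    apply Finset.sum_congr rfl
    intro α _
    rw [hgdef, mul_pow, hsq α]
  have hmink := weighted_minkowski A f g
    (fun α _ => mul_nonneg (Real.sqrt_nonneg _) (norm_nonneg _))
    (fun α _ => mul_nonneg (Real.sqrt_nonneg _) (norm_nonneg _))
  -- termwise bound
  have hterm : ∑ α ∈ A, (f α - g α) ^ 2 ≤
      ∑ α ∈ A, (Nat.multinomial Finset.univ α : ℝ) * ‖P α h - (∏ i, lam i ^ α i) • h‖ ^ 2 := by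
    apply Finset.sum_le_sum
    intro α _
    have hfg : f α - g α
        = Real.sqrt (Nat.multinomial Finset.univ α : ℝ) * (‖P α h‖ - ‖∏ i, lam i ^ α i‖) := by
      rw [hfdef, hgdef]; ring
    rw [hfg, mul_pow, hsq α]
    apply mul_le_mul_of_nonneg_left _ (by positivity)
    have hnorm : ‖(∏ i, lam i ^ α i) • h‖ = ‖∏ i, lam i ^ α i‖ := by
      rw [norm_smul, hh, mul_one]
    have habs : |‖P α h‖ - ‖(∏ i, lam i ^ α i) • h‖| ≤ ‖P α h - (∏ i, lam i ^ α i) • h‖ :=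
      abs_norm_sub_norm_le _ _
    calc (‖P α h‖ - ‖∏ i, lam i ^ α i‖) ^ 2
        = |‖P α h‖ - ‖(∏ i, lam i ^ α i) • h‖| ^ 2 := by rw [hnorm, sq_abs]
      _ ≤ ‖P α h - (∏ i, lam i ^ α i) • h‖ ^ 2 := by
          apply pow_le_pow_left₀ (abs_nonneg _) habs
  -- lower bounds on the sqrt quantities
  have hsf : μ ^ k ≤ Real.sqrt (∑ α ∈ A, f α ^ 2) := by
    rw [hf2]
    calc μ ^ k = Real.sqrt ((μ ^ k) ^ 2) := (Real.sqrt_sq (by positivity)).symm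
      _ ≤ Real.sqrt (∑ α ∈ A, (Nat.multinomial Finset.univ α : ℝ) * ‖P α h‖ ^ 2) := by
          apply Real.sqrt_le_sqrt
          calc (μ ^ k) ^ 2 = μ ^ (2 * k) := by rw [← pow_mul]; ring_nf
            _ ≤ _ := hA2
  have hsg : Real.sqrt (∑ α ∈ A, g α ^ 2) = L ^ k := by
    rw [hg2]
    have : (∑ i, ‖lam i‖ ^ 2) = L ^ 2 := by
      rw [hLdef]
      exact (Real.sq_sqrt (by positivity)).symm
    rw [this, ← pow_mul, mul_comm 2 k, pow_mul]
    exact Real.sqrt_sq (by positivity)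
  have hLk : L ^ k < μ ^ k := by
    apply pow_lt_pow_left₀ hlam hL0 hk.ne'
  have hfinal : (μ ^ k - L ^ k) ^ 2 ≤
      (Real.sqrt (∑ α ∈ A, f α ^ 2) - Real.sqrt (∑ α ∈ A, g α ^ 2)) ^ 2 := by
    rw [hsg]
    apply pow_le_pow_left₀ (by linarith)
    linarith
  constructor
  · calc (μ ^ k - L ^ k) ^ 2
        ≤ (Real.sqrt (∑ α ∈ A, f α ^ 2) - Real.sqrt (∑ α ∈ A, g α ^ 2)) ^ 2 := hfinal
      _ ≤ ∑ α ∈ A, (f α - g α) ^ 2 := hmink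
      _ ≤ _ := hterm
  · apply pow_pos
    linarith
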